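/- arXiv:1011.0943 — 2 statements merged into one kernel-verified Lean document; each statement's English description precedes it below -/
import Mathlib

section
/- Let Z be a random vector in ℝⁿ and G_n a standard Gaussian random vector in ℝⁿ independent of Z. Then for every real p ≥ 1: E[(|Z + G_n|²/2)^p] ≥ n^{p/2}·E[|Z|^p], where both sides are interpreted in [0,∞]. -/
open MeasureTheory ProbabilityTheory Real
open scoped ENNReal RealInnerProductSpace Pointwise NNReal

noncomputable section

/-- A nonnegative function is log-concave if `f(λx+(1-λ)y) ≥ f(x)^λ f(y)^{1-λ}`. -/
def IsLogConcaveFn {E : Type*} [AddCommGroup E] [Module ℝ E] (f : E → ℝ) : Prop :=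
  (∀ x, 0 ≤ f x) ∧
  ∀ x y : E, ∀ l : ℝ, 0 ≤ l → l ≤ 1 →
    f x ^ l * f y ^ (1 - l) ≤ f (l • x + (1 - l) • y)

/-- Hilbert-Schmidt (Frobenius) norm of a matrix. -/
def hsNorm {n : ℕ} (A : Matrix (Fin n) (Fin n) ℝ) : ℝ :=
  Real.sqrt (∑ i, ∑ j, (A i j) ^ 2)

/-- Operator norm of a matrix acting on Euclidean space. -/
def opNorm {n : ℕ} (A : Matrix (Fin n) (Fin n) ℝ) : ℝ :=
  ‖LinearMap.toContinuousLinearMap (Matrix.toEuclideanLin A)‖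

/-- Application of a matrix to a Euclidean vector. -/
def mApp {n : ℕ} (A : Matrix (Fin n) (Fin n) ℝ) (x : EuclideanSpace ℝ (Fin n)) :
    EuclideanSpace ℝ (Fin n) := Matrix.toEuclideanLin A x

/-- The random vector `X` has density `f` with respect to Lebesgue measure. -/
def HasDensityFn {Ω : Type*} [MeasurableSpace Ω] (P : Measure Ω) {n : ℕ}
    (X : Ω → EuclideanSpace ℝ (Fin n)) (f : EuclideanSpace ℝ (Fin n) → ℝ) : Prop :=
  Measurable X ∧ Measure.map X P = volume.withDensity fun x => ENNReal.ofReal (f x)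

/-- `X` is isotropic: centered with identity covariance. -/
def Isotropic {Ω : Type*} [MeasurableSpace Ω] (P : Measure Ω) {n : ℕ}
    (X : Ω → EuclideanSpace ℝ (Fin n)) : Prop :=
  (∫ ω, X ω ∂P) = 0 ∧
  ∀ θ η : EuclideanSpace ℝ (Fin n), (∫ ω, ⟪X ω, θ⟫ * ⟪X ω, η⟫ ∂P) = ⟪θ, η⟫

/-- `X` is ψ_α with constant `b`. -/
def IsPsiAlpha {Ω : Type*} [MeasurableSpace Ω] (P : Measure Ω) {n : ℕ}
    (X : Ω → EuclideanSpace ℝ (Fin n)) (α b : ℝ) : Prop :=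
  ∀ p : ℝ, 2 ≤ p → ∀ y : EuclideanSpace ℝ (Fin n),
    (∫ ω, |⟪X ω, y⟫| ^ p ∂P) ^ (1/p) ≤ b * p ^ (1/α) * (∫ ω, ⟪X ω, y⟫ ^ 2 ∂P) ^ ((1:ℝ)/2)

/-- `G` is a standard Gaussian random vector in `ℝⁿ`. -/
def IsStdGaussian {Ω : Type*} [MeasurableSpace Ω] (P : Measure Ω) {n : ℕ}
    (G : Ω → EuclideanSpace ℝ (Fin n)) : Prop :=
  Measurable G ∧
  Measure.map G P = volume.withDensity fun x =>
    ENNReal.ofReal ((2 * π) ^ (-(n:ℝ)/2) * Real.exp (-‖x‖ ^ 2 / 2))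

/-- Surface area of the unit sphere `S^{k-1}` in `ℝᵏ`. -/
def sphereVol (k : ℕ) : ℝ := 2 * π ^ ((k : ℝ)/2) / Real.Gamma ((k : ℝ)/2)

/-- The marginal density `π_F g(x) = ∫_{F^⊥} g(x+y) dy`. -/
def marginalDensity {n : ℕ} (g : EuclideanSpace ℝ (Fin n) → ℝ)
    (F : Submodule ℝ (EuclideanSpace ℝ (Fin n))) (x : EuclideanSpace ℝ (Fin n)) : ℝ :=
  ∫ y : Fᗮ, g (x + y)

/-- `h_{k,p}(u) = vol(S^{k-1}) ∫₀^∞ t^{p+k-1} π_{u(E₀)} g(t u(θ₀)) dt`. -/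
def hkp {n : ℕ} (g : EuclideanSpace ℝ (Fin n) → ℝ)
    (E₀ : Submodule ℝ (EuclideanSpace ℝ (Fin n))) (θ₀ : EuclideanSpace ℝ (Fin n))
    (k : ℕ) (p : ℝ) (u : Matrix (Fin n) (Fin n) ℝ) : ℝ :=
  sphereVol k * ∫ t in Set.Ioi (0:ℝ), t ^ (p + (k:ℝ) - 1) *
    marginalDensity g (Submodule.map (Matrix.toEuclideanLin u) E₀) (t • mApp u θ₀)

/-- Support functional of the one-sided L_q-centroid body `Z⁺_q(w)`. -/
def suppZplus {m : ℕ} (w : EuclideanSpace ℝ (Fin m) → ℝ) (q : ℝ)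
    (y : EuclideanSpace ℝ (Fin m)) : ℝ :=
  (2 * ∫ x, (max ⟪x, y⟫ 0) ^ q * w x) ^ (1/q)

/-- Ball's body `K_q(w) = {x : q ∫₀^∞ t^{q-1} w(tx) dt ≥ 1}`. -/
def ballBody {m : ℕ} (w : EuclideanSpace ℝ (Fin m) → ℝ) (q : ℝ) :
    Set (EuclideanSpace ℝ (Fin m)) :=
  {x | 1 ≤ q * ∫ t in Set.Ioi (0:ℝ), t ^ (q-1) * w (t • x)}

/-- The one-sided L_q-centroid body `Z⁺_q(w)`, as the convex set with support
functional `suppZplus w q`. -/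
def ZplusBody {m : ℕ} (w : EuclideanSpace ℝ (Fin m) → ℝ) (q : ℝ) :
    Set (EuclideanSpace ℝ (Fin m)) :=
  {x | ∀ y, ⟪x, y⟫ ≤ suppZplus w q y}

section AuxForStatement16
open Set

def phi (t : ℝ) : ℝ := (2 * π) ^ (-(1:ℝ)/2) * Real.exp (-t ^ 2 / 2)

lemma c1_pos : 0 < (2 * π) ^ (-(1:ℝ)/2) := Real.rpow_pos_of_pos (by positivity) _

lemma c1_eq : (2 * π) ^ (-(1:ℝ)/2) = (Real.sqrt (2 * π))⁻¹ := by
  rw [Real.sqrt_eq_rpow, ← Real.rpow_neg (by positivity)]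
  norm_num

lemma phi_nonneg (t : ℝ) : 0 ≤ phi t := by
  unfold phi; positivity

lemma integral_exp_neg_sq_half : ∫ t : ℝ, Real.exp (-t ^ 2 / 2) = Real.sqrt (2 * π) := by
  have : ∀ t : ℝ, -t ^ 2 / 2 = -(1/2) * t ^ 2 := fun t => by ring
  simp_rw [this, integral_gaussian]
  rw [show π / (1/2) = 2 * π by ring]

lemma integrable_exp_half : Integrable (fun t : ℝ => Real.exp (-t ^ 2 / 2)) := by
  have : ∀ t : ℝ, -t ^ 2 / 2 = -(1/2) * t ^ 2 := fun t => by ring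
  simp_rw [this]
  exact integrable_exp_neg_mul_sq (by norm_num)

lemma integral_phi : ∫ t : ℝ, phi t = 1 := by
  unfold phi
  rw [integral_const_mul, integral_exp_neg_sq_half, c1_eq,
    inv_mul_cancel₀ (by positivity)]

lemma integrable_sq_exp : Integrable (fun t : ℝ => t ^ 2 * Real.exp (-t ^ 2 / 2)) := by
  have h := integrable_rpow_mul_exp_neg_mul_sq (b := 1/2) (by norm_num) (s := 2) (by norm_num)
  have e : (fun t : ℝ => t ^ 2 * Real.exp (-t ^ 2 / 2))
      = fun x : ℝ => x ^ (2:ℝ) * Real.exp (-(1/2) * x ^ 2) := by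
    funext t
    rw [show ((2:ℝ)) = ((2:ℕ):ℝ) by norm_num, Real.rpow_natCast]
    ring_nf
  rw [e]; exact h

lemma integrable_id_exp : Integrable (fun t : ℝ => t * Real.exp (-t ^ 2 / 2)) := by
  have h := integrable_mul_exp_neg_mul_sq (b := 1/2) (by norm_num)
  have e : (fun t : ℝ => t * Real.exp (-t ^ 2 / 2))
      = fun x : ℝ => x * Real.exp (-(1/2) * x ^ 2) := by
    funext t; ring_nf
  rw [e]; exact h

lemma integral_id_exp : ∫ t : ℝ, t * Real.exp (-t ^ 2 / 2) = 0 := by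
  have h := integral_neg_eq_self (fun t : ℝ => t * Real.exp (-t ^ 2 / 2)) volume
  have h2 : (fun t : ℝ => (-t) * Real.exp (-(-t) ^ 2 / 2))
      = fun t : ℝ => -(t * Real.exp (-t ^ 2 / 2)) := by
    funext t; rw [neg_sq]; ring
  rw [h2, integral_neg] at h
  linarith

lemma integral_sq_exp : ∫ t : ℝ, t ^ 2 * Real.exp (-t ^ 2 / 2) = Real.sqrt (2 * π) := by
  have habs : (fun x : ℝ => |x| ^ 2 * Real.exp (-|x| ^ 2 / 2))
      = fun t : ℝ => t ^ 2 * Real.exp (-t ^ 2 / 2) := by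
    funext t; rw [sq_abs]
  have h := integral_comp_abs (f := fun t : ℝ => t ^ 2 * Real.exp (-t ^ 2 / 2))
  rw [habs] at h
  rw [h]
  have e : ∀ x ∈ Ioi (0:ℝ), x ^ 2 * Real.exp (-x ^ 2 / 2)
      = x ^ (2:ℝ) * Real.exp (-(1/2) * x ^ (2:ℝ)) := by
    intro x _
    rw [show ((2:ℝ)) = ((2:ℕ):ℝ) by norm_num, Real.rpow_natCast]
    ring_nf
  rw [setIntegral_congr_fun measurableSet_Ioi e,
    integral_rpow_mul_exp_neg_mul_rpow (by norm_num) (by norm_num) (by norm_num)]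
  rw [show ((2:ℝ)+1)/2 = 1/2 + 1 by norm_num, Real.Gamma_add_one (by norm_num),
    Real.Gamma_one_half_eq]
  rw [show (-((2:ℝ)+1)/2) = -(3/2) by norm_num,
    show ((1:ℝ)/2) = 2⁻¹ by norm_num,
    Real.inv_rpow (by norm_num : (0:ℝ) ≤ 2), Real.rpow_neg (by norm_num : (0:ℝ) ≤ 2), inv_inv]
  rw [show (3/2 : ℝ) = 1 + 1/2 by norm_num, Real.rpow_add (by norm_num), Real.rpow_one,
    ← Real.sqrt_eq_rpow]
  rw [Real.sqrt_mul (by norm_num)]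
  have h2 : Real.sqrt 2 > 0 := by positivity
  field_simp

lemma integrable_phi : Integrable phi := by
  unfold phi; exact integrable_exp_half.const_mul _

lemma integrable_id_phi : Integrable (fun t : ℝ => t * phi t) := by
  unfold phi
  have e : (fun t : ℝ => t * ((2 * π) ^ (-(1:ℝ)/2) * Real.exp (-t ^ 2 / 2)))
      = fun t : ℝ => (2 * π) ^ (-(1:ℝ)/2) * (t * Real.exp (-t ^ 2 / 2)) := by
    funext t; ring
  rw [e]; exact integrable_id_exp.const_mul _

lemma integrable_sq_phi : Integrable (fun t : ℝ => t ^ 2 * phi t) := by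
  unfold phi
  have e : (fun t : ℝ => t ^ 2 * ((2 * π) ^ (-(1:ℝ)/2) * Real.exp (-t ^ 2 / 2)))
      = fun t : ℝ => (2 * π) ^ (-(1:ℝ)/2) * (t ^ 2 * Real.exp (-t ^ 2 / 2)) := by
    funext t; ring
  rw [e]; exact integrable_sq_exp.const_mul _

lemma integral_id_phi : ∫ t : ℝ, t * phi t = 0 := by
  unfold phi
  have e : (fun t : ℝ => t * ((2 * π) ^ (-(1:ℝ)/2) * Real.exp (-t ^ 2 / 2)))
      = fun t : ℝ => (2 * π) ^ (-(1:ℝ)/2) * (t * Real.exp (-t ^ 2 / 2)) := by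
    funext t; ring
  rw [e, integral_const_mul, integral_id_exp, mul_zero]

lemma integral_sq_phi : ∫ t : ℝ, t ^ 2 * phi t = 1 := by
  unfold phi
  have e : (fun t : ℝ => t ^ 2 * ((2 * π) ^ (-(1:ℝ)/2) * Real.exp (-t ^ 2 / 2)))
      = fun t : ℝ => (2 * π) ^ (-(1:ℝ)/2) * (t ^ 2 * Real.exp (-t ^ 2 / 2)) := by
    funext t; ring
  rw [e, integral_const_mul, integral_sq_exp, c1_eq, inv_mul_cancel₀ (by positivity)]

lemma integrable_shift_sq_phi (a : ℝ) : Integrable (fun t : ℝ => (a + t) ^ 2 * phi t) := by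
  have e : (fun t : ℝ => (a + t) ^ 2 * phi t)
      = fun t : ℝ => (a ^ 2) * phi t + (2 * a) * (t * phi t) + t ^ 2 * phi t := by
    funext t; ring
  rw [e]
  exact ((integrable_phi.const_mul _).add (integrable_id_phi.const_mul _)).add integrable_sq_phi

lemma integral_shift_sq_phi (a : ℝ) : ∫ t : ℝ, (a + t) ^ 2 * phi t = a ^ 2 + 1 := by
  have e : (fun t : ℝ => (a + t) ^ 2 * phi t)
      = fun t : ℝ => (a ^ 2) * phi t + (2 * a) * (t * phi t) + t ^ 2 * phi t := by
    funext t; ring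
  have hA : Integrable (fun t : ℝ => a ^ 2 * phi t + 2 * a * (t * phi t)) :=
    (integrable_phi.const_mul _).add (integrable_id_phi.const_mul _)
  rw [e, integral_add hA integrable_sq_phi,
    integral_add (integrable_phi.const_mul _) (integrable_id_phi.const_mul _),
    integral_const_mul, integral_const_mul, integral_phi, integral_id_phi, integral_sq_phi]
  ring

section Multi
variable {n : ℕ}

def gfun (w : Fin n → ℝ) (i j : Fin n) : ℝ → ℝ :=
  if j = i then (fun t => (w i + t) ^ 2 * phi t) else phi

lemma gfun_integrable (w : Fin n → ℝ) (i j : Fin n) : Integrable (gfun w i j) := by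
  unfold gfun
  split
  · exact integrable_shift_sq_phi _
  · exact integrable_phi

lemma gfun_prod_eq (w : Fin n → ℝ) (i : Fin n) (y : Fin n → ℝ) :
    (w i + y i) ^ 2 * ∏ j, phi (y j) = ∏ j, gfun w i j (y j) := by
  rw [← Finset.mul_prod_erase Finset.univ (fun j => gfun w i j (y j)) (Finset.mem_univ i),
    ← Finset.mul_prod_erase Finset.univ (fun j => phi (y j)) (Finset.mem_univ i)]
  have h1 : gfun w i i (y i) = (w i + y i) ^ 2 * phi (y i) := by
    unfold gfun; rw [if_pos rfl]
  have h2 : ∏ j ∈ Finset.univ.erase i, gfun w i j (y j)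
      = ∏ j ∈ Finset.univ.erase i, phi (y j) := by
    refine Finset.prod_congr rfl (fun j hj => ?_)
    unfold gfun; rw [if_neg (Finset.ne_of_mem_erase hj)]
  rw [h1, h2]; ring

lemma gfun_integral (w : Fin n → ℝ) (i : Fin n) :
    ∏ j, ∫ t : ℝ, gfun w i j t = w i ^ 2 + 1 := by
  rw [← Finset.mul_prod_erase Finset.univ (fun j => ∫ t : ℝ, gfun w i j t)
    (Finset.mem_univ i)]
  have h1 : (∫ t : ℝ, gfun w i i t) = w i ^ 2 + 1 := by
    unfold gfun; rw [if_pos rfl]; exact integral_shift_sq_phi _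
  have h2 : ∏ j ∈ Finset.univ.erase i, (∫ t : ℝ, gfun w i j t) = 1 := by
    refine Finset.prod_eq_one (fun j hj => ?_)
    unfold gfun; rw [if_neg (Finset.ne_of_mem_erase hj)]; exact integral_phi
  rw [h1, h2, mul_one]

lemma multi_eq (w : Fin n → ℝ) :
    (fun y : Fin n → ℝ => (∑ i, (w i + y i) ^ 2) * ∏ j, phi (y j))
      = fun y => ∑ i, ∏ j, gfun w i j (y j) := by
  funext y
  rw [Finset.sum_mul]
  exact Finset.sum_congr rfl (fun i _ => gfun_prod_eq w i y)

lemma multi_integrable (w : Fin n → ℝ) :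
    Integrable (fun y : Fin n → ℝ => (∑ i, (w i + y i) ^ 2) * ∏ j, phi (y j)) := by
  rw [multi_eq]
  exact integrable_finset_sum _ (fun i _ =>
    Integrable.fintype_prod (f := fun j => gfun w i j) (fun j => gfun_integrable w i j))

lemma multi_integral (w : Fin n → ℝ) :
    ∫ y : Fin n → ℝ, (∑ i, (w i + y i) ^ 2) * ∏ j, phi (y j) = ∑ i, (w i ^ 2 + 1) := by
  rw [multi_eq]
  rw [integral_finset_sum (μ := volume) _ (fun i _ =>
    Integrable.fintype_prod (f := fun j => gfun w i j) (fun j => gfun_integrable w i j))]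
  refine Finset.sum_congr rfl (fun i _ => ?_)
  rw [MeasureTheory.integral_fintype_prod_volume_eq_prod (fun j => gfun w i j)]
  exact gfun_integral w i

end Multi

section Euc
variable {n : ℕ}

lemma euc_norm_sq (v : EuclideanSpace ℝ (Fin n)) : ‖v‖ ^ 2 = ∑ i, v i ^ 2 := by
  rw [EuclideanSpace.norm_eq, Real.sq_sqrt (by positivity)]
  simp [sq_abs]

lemma cn_eq : (2 * π) ^ (-(n:ℝ)/2) = ((2 * π) ^ (-(1:ℝ)/2)) ^ n := by
  rw [← Real.rpow_natCast ((2 * π) ^ (-(1:ℝ)/2)) n, ← Real.rpow_mul (by positivity)]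
  congr 1
  push_cast
  ring

lemma comp_eq (z : EuclideanSpace ℝ (Fin n)) (y : Fin n → ℝ) :
    ‖z + (MeasurableEquiv.toLp 2 (Fin n → ℝ)) y‖ ^ 2 *
      ((2 * π) ^ (-(n:ℝ)/2) * Real.exp (-‖(MeasurableEquiv.toLp 2 (Fin n → ℝ)) y‖ ^ 2 / 2))
    = (∑ i, (z i + y i) ^ 2) * ∏ j, phi (y j) := by
  have happ : ∀ i, ((MeasurableEquiv.toLp 2 (Fin n → ℝ)) y) i = y i := fun i => rfl
  have h1 : ‖z + (MeasurableEquiv.toLp 2 (Fin n → ℝ)) y‖ ^ 2 = ∑ i, (z i + y i) ^ 2 := by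
    rw [euc_norm_sq]
    exact Finset.sum_congr rfl (fun i _ => by rw [show (z + (MeasurableEquiv.toLp 2 (Fin n → ℝ)) y) i = z i + y i from rfl])
  have h2 : ‖(MeasurableEquiv.toLp 2 (Fin n → ℝ)) y‖ ^ 2 = ∑ i, y i ^ 2 := by
    rw [euc_norm_sq]
    exact Finset.sum_congr rfl (fun i _ => rfl)
  rw [h1, h2, cn_eq]
  unfold phi
  rw [Finset.prod_mul_distrib, Finset.prod_const, Finset.card_univ, Fintype.card_fin]
  congr 2
  rw [← Real.exp_sum]
  congr 1
  rw [← Finset.sum_div, Finset.sum_neg_distrib, neg_div]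

lemma euc_integrable (z : EuclideanSpace ℝ (Fin n)) :
    Integrable (fun x : EuclideanSpace ℝ (Fin n) =>
      ‖z + x‖ ^ 2 * ((2 * π) ^ (-(n:ℝ)/2) * Real.exp (-‖x‖ ^ 2 / 2))) := by
  have hmp := (EuclideanSpace.volume_preserving_symm_measurableEquiv_toLp (Fin n)).symm
  rw [MeasurableEquiv.symm_symm] at hmp
  rw [← hmp.integrable_comp_emb (MeasurableEquiv.toLp 2 (Fin n → ℝ)).measurableEmbedding]
  have : (fun x : EuclideanSpace ℝ (Fin n) =>
      ‖z + x‖ ^ 2 * ((2 * π) ^ (-(n:ℝ)/2) * Real.exp (-‖x‖ ^ 2 / 2))) ∘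
      (MeasurableEquiv.toLp 2 (Fin n → ℝ))
      = fun y : Fin n → ℝ => (∑ i, (z i + y i) ^ 2) * ∏ j, phi (y j) := by
    funext y; exact comp_eq z y
  rw [this]
  exact multi_integrable _

lemma euc_integral (z : EuclideanSpace ℝ (Fin n)) :
    ∫ x : EuclideanSpace ℝ (Fin n),
      ‖z + x‖ ^ 2 * ((2 * π) ^ (-(n:ℝ)/2) * Real.exp (-‖x‖ ^ 2 / 2)) = ‖z‖ ^ 2 + n := by
  have hmp := (EuclideanSpace.volume_preserving_symm_measurableEquiv_toLp (Fin n)).symm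
  rw [MeasurableEquiv.symm_symm] at hmp
  rw [← hmp.integral_comp (MeasurableEquiv.toLp 2 (Fin n → ℝ)).measurableEmbedding]
  have heq : (fun y : Fin n → ℝ => ‖z + (MeasurableEquiv.toLp 2 (Fin n → ℝ)) y‖ ^ 2 *
      ((2 * π) ^ (-(n:ℝ)/2) * Real.exp (-‖(MeasurableEquiv.toLp 2 (Fin n → ℝ)) y‖ ^ 2 / 2)))
      = fun y : Fin n → ℝ => (∑ i, (z i + y i) ^ 2) * ∏ j, phi (y j) := by
    funext y; exact comp_eq z y
  rw [show (∫ y : Fin n → ℝ, ‖z + (MeasurableEquiv.toLp 2 (Fin n → ℝ)) y‖ ^ 2 *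
      ((2 * π) ^ (-(n:ℝ)/2) * Real.exp (-‖(MeasurableEquiv.toLp 2 (Fin n → ℝ)) y‖ ^ 2 / 2)))
      = ∫ y : Fin n → ℝ, (∑ i, (z i + y i) ^ 2) * ∏ j, phi (y j) from by rw [heq]]
  rw [multi_integral, Finset.sum_add_distrib, Finset.sum_const, Finset.card_univ,
    Fintype.card_fin, euc_norm_sq]
  simp

end Euc

open scoped ENNReal

lemma jensen_pow {α : Type*} [MeasurableSpace α] (μ : Measure α) [IsProbabilityMeasure μ]
    {f : α → ℝ≥0∞} (hf : AEMeasurable f μ) {p : ℝ} (hp : 1 ≤ p) :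
    (∫⁻ a, f a ∂μ) ^ p ≤ ∫⁻ a, f a ^ p ∂μ := by
  rcases eq_or_lt_of_le hp with h1 | h1
  · rw [← h1]; simp
  · have hpq := Real.HolderConjugate.conjExponent h1
    have h := ENNReal.lintegral_mul_le_Lp_mul_Lq μ hpq hf
      (aemeasurable_const (b := (1:ℝ≥0∞)))
    simp only [Pi.mul_apply, mul_one, ENNReal.one_rpow, lintegral_one, measure_univ] at h
    have hple : (∫⁻ a, f a ∂μ) ≤ (∫⁻ a, f a ^ p ∂μ) ^ (1/p) := h
    calc (∫⁻ a, f a ∂μ) ^ p ≤ ((∫⁻ a, f a ^ p ∂μ) ^ (1/p)) ^ p :=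
          ENNReal.rpow_le_rpow hple (by linarith)
    _ = ∫⁻ a, f a ^ p ∂μ := by
        rw [← ENNReal.rpow_mul, one_div, inv_mul_cancel₀ (by linarith), ENNReal.rpow_one]

lemma dens_measurable (n : ℕ) : Measurable fun x : EuclideanSpace ℝ (Fin n) =>
    ENNReal.ofReal ((2 * π) ^ (-(n:ℝ)/2) * Real.exp (-‖x‖ ^ 2 / 2)) := by
  apply ENNReal.measurable_ofReal.comp
  fun_prop

lemma shift_measurable (n : ℕ) (z : EuclideanSpace ℝ (Fin n)) :
    Measurable fun x : EuclideanSpace ℝ (Fin n) => ENNReal.ofReal (‖z + x‖ ^ 2 / 2) := by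
  apply ENNReal.measurable_ofReal.comp
  fun_prop

lemma inner_lintegral (n : ℕ) (z : EuclideanSpace ℝ (Fin n)) :
    ∫⁻ x, ENNReal.ofReal (‖z + x‖ ^ 2 / 2) ∂(volume.withDensity fun x =>
      ENNReal.ofReal ((2 * π) ^ (-(n:ℝ)/2) * Real.exp (-‖x‖ ^ 2 / 2)))
    = ENNReal.ofReal ((‖z‖ ^ 2 + n) / 2) := by
  rw [lintegral_withDensity_eq_lintegral_mul _ (dens_measurable n) (shift_measurable n z)]
  simp only [Pi.mul_apply]
  have h1 : ∀ x : EuclideanSpace ℝ (Fin n),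
      ENNReal.ofReal ((2 * π) ^ (-(n:ℝ)/2) * Real.exp (-‖x‖ ^ 2 / 2)) *
        ENNReal.ofReal (‖z + x‖ ^ 2 / 2)
      = ENNReal.ofReal (‖z + x‖ ^ 2 * ((2 * π) ^ (-(n:ℝ)/2) * Real.exp (-‖x‖ ^ 2 / 2)) / 2) := by
    intro x
    rw [← ENNReal.ofReal_mul (by positivity)]
    congr 1
    ring
  rw [lintegral_congr h1,
    ← ofReal_integral_eq_lintegral_ofReal ((euc_integrable z).div_const 2)
      (Filter.Eventually.of_forall fun x => by positivity)]
  rw [integral_div, euc_integral]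

lemma key_bound (n : ℕ) (z : EuclideanSpace ℝ (Fin n)) {p : ℝ} (hp : 1 ≤ p)
    (μ : Measure (EuclideanSpace ℝ (Fin n))) [IsProbabilityMeasure μ]
    (hμ : μ = volume.withDensity fun x =>
      ENNReal.ofReal ((2 * π) ^ (-(n:ℝ)/2) * Real.exp (-‖x‖ ^ 2 / 2))) :
    ENNReal.ofReal ((n:ℝ) ^ (p/2) * ‖z‖ ^ p) ≤
      ∫⁻ g, ENNReal.ofReal ((‖z + g‖ ^ 2 / 2) ^ p) ∂μ := by
  have h1 : ∀ g : EuclideanSpace ℝ (Fin n), ENNReal.ofReal ((‖z + g‖ ^ 2 / 2) ^ p)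
      = ENNReal.ofReal (‖z + g‖ ^ 2 / 2) ^ p := fun g =>
    (ENNReal.ofReal_rpow_of_nonneg (by positivity) (by linarith)).symm
  rw [lintegral_congr h1]
  have h2 := jensen_pow μ (shift_measurable n z).aemeasurable hp
  refine le_trans ?_ h2
  rw [hμ, inner_lintegral n z, ENNReal.ofReal_rpow_of_nonneg (by positivity) (by linarith)]
  apply ENNReal.ofReal_le_ofReal
  have hb : Real.sqrt n * ‖z‖ ≤ (‖z‖ ^ 2 + n) / 2 := by
    nlinarith [sq_nonneg (‖z‖ - Real.sqrt n), Real.sq_sqrt (Nat.cast_nonneg n : (0:ℝ) ≤ n),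
      Real.sqrt_nonneg n, norm_nonneg z]
  have he : (n:ℝ) ^ (p/2) * ‖z‖ ^ p = (Real.sqrt n * ‖z‖) ^ p := by
    rw [Real.mul_rpow (Real.sqrt_nonneg n) (norm_nonneg z), Real.sqrt_eq_rpow,
      ← Real.rpow_mul (Nat.cast_nonneg n), show ((1:ℝ)/2) * p = p/2 from by ring]
  rw [he]
  exact Real.rpow_le_rpow (by positivity) hb (by linarith)


end AuxForStatement16

/-- `E[(|Z+G_n|²/2)^p] ≥ n^{p/2} E|Z|^p` for `p ≥ 1`. -/
theorem statement16 (n : ℕ) (Ω : Type) (_mΩ : MeasurableSpace Ω) (P : Measure Ω)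
    (hP : IsProbabilityMeasure P) (Z G : Ω → EuclideanSpace ℝ (Fin n))
    (hZ : Measurable Z) (hG : IsStdGaussian P G) (hInd : IndepFun Z G P)
    (p : ℝ) (hp : 1 ≤ p) :
    ENNReal.ofReal ((n : ℝ) ^ (p/2)) * ∫⁻ ω, ENNReal.ofReal (‖Z ω‖ ^ p) ∂P ≤
      ∫⁻ ω, ENNReal.ofReal ((‖Z ω + G ω‖ ^ 2 / 2) ^ p) ∂P := by
  obtain ⟨hGmeas, hGmap⟩ := hG
  haveI : IsProbabilityMeasure (Measure.map G P) :=
    Measure.isProbabilityMeasure_map hGmeas.aemeasurable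
  haveI : IsProbabilityMeasure (Measure.map Z P) :=
    Measure.isProbabilityMeasure_map hZ.aemeasurable
  have hprod : Measure.map (fun ω => (Z ω, G ω)) P =
      (Measure.map Z P).prod (Measure.map G P) :=
    (indepFun_iff_map_prod_eq_prod_map_map hZ.aemeasurable hGmeas.aemeasurable).mp hInd
  have hF : Measurable fun x : EuclideanSpace ℝ (Fin n) × EuclideanSpace ℝ (Fin n) =>
      ENNReal.ofReal ((‖x.1 + x.2‖ ^ 2 / 2) ^ p) := by
    apply ENNReal.measurable_ofReal.comp
    fun_prop
  have hRHS : ∫⁻ ω, ENNReal.ofReal ((‖Z ω + G ω‖ ^ 2 / 2) ^ p) ∂P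
      = ∫⁻ z, ∫⁻ g, ENNReal.ofReal ((‖z + g‖ ^ 2 / 2) ^ p) ∂(Measure.map G P)
          ∂(Measure.map Z P) := by
    rw [← lintegral_map hF (hZ.prodMk hGmeas), hprod, lintegral_prod _ hF.aemeasurable]
  have hnorm : Measurable fun z : EuclideanSpace ℝ (Fin n) => ENNReal.ofReal (‖z‖ ^ p) := by
    apply ENNReal.measurable_ofReal.comp
    fun_prop
  have hLHS : ∫⁻ ω, ENNReal.ofReal (‖Z ω‖ ^ p) ∂P
      = ∫⁻ z, ENNReal.ofReal (‖z‖ ^ p) ∂(Measure.map Z P) := by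
    rw [lintegral_map hnorm hZ]
  rw [hRHS, hLHS, ← lintegral_const_mul _ hnorm]
  apply lintegral_mono
  intro z
  dsimp only
  rw [← ENNReal.ofReal_mul (by positivity)]
  exact key_bound n z hp (Measure.map G P) hGmap
end
end

section
/- Let f be a log-concave probability density on ℝ (∫f = 1) and let ε > 0. If ε ≤ ∫₀^∞ f(x) dx ≤ 1 − ε, then f(0) ≥ ε·sup_{x∈ℝ} f(x). -/
open MeasureTheory ProbabilityTheory Real
open scoped ENNReal RealInnerProductSpace Pointwise NNReal

noncomputable section

open Set in
private lemma key18 (f : ℝ → ℝ) (hlc : IsLogConcaveFn f) (hInt : Integrable f)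
    (hmass : (∫ x, f x) = 1) (ε : ℝ) (hε : 0 < ε)
    (h₁ : ε ≤ ∫ x in Set.Ioi (0:ℝ), f x) (h₂ : (∫ x in Set.Ioi (0:ℝ), f x) ≤ 1 - ε)
    (x : ℝ) (hx : 0 < x) : ε * f x ≤ f 0 := by
  by_contra hcon
  push_neg at hcon
  have hf0 : 0 ≤ f 0 := hlc.1 0
  have hε2 : ε ≤ 1 - ε := le_trans h₁ h₂
  have hε1 : ε ≤ 1 := by linarith
  have hm : 0 < f x := by nlinarith [hlc.1 x]
  have hIio : (∫ t in Iio (0:ℝ), f t) = 1 - ∫ t in Ioi (0:ℝ), f t := by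
    have h := intervalIntegral.integral_Iic_add_Ioi (b := (0:ℝ)) hInt.integrableOn hInt.integrableOn
    rw [integral_Iic_eq_integral_Iio, hmass] at h
    linarith
  have hf0pos : 0 < f 0 := by
    rcases hf0.lt_or_eq with h | h
    · exact h
    exfalso
    have hz : ∀ t ∈ Iio (0:ℝ), f t = (0:ℝ) := by
      intro t ht
      simp only [mem_Iio] at ht
      have hxt : 0 < x - t := by linarith
      set l : ℝ := -t / (x - t) with hl
      have hl0 : 0 ≤ l := div_nonneg (by linarith) hxt.le
      have hl1 : l < 1 := by rw [div_lt_one hxt]; linarith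
      have h0 := hlc.2 x t l hl0 hl1.le
      have hzero : l • x + (1 - l) • t = 0 := by
        simp only [smul_eq_mul, hl]; field_simp; ring
      rw [hzero, ← h] at h0
      have hp1 : (0:ℝ) < f x ^ l := Real.rpow_pos_of_pos hm l
      have hp2 : 0 ≤ f t ^ (1 - l) := Real.rpow_nonneg (hlc.1 t) _
      have hp3 : f t ^ (1 - l) = 0 := by nlinarith
      exact ((Real.rpow_eq_zero_iff_of_nonneg (hlc.1 t)).mp hp3).1
    have h0 : (∫ t in Iio (0:ℝ), f t) = 0 := by
      rw [setIntegral_congr_fun measurableSet_Iio hz]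
      simp
    rw [hIio] at h0; linarith
  set a := Real.log (f 0) with ha
  set b := Real.log (f x) with hb
  have hab : a < b := Real.log_lt_log hf0pos (by nlinarith)
  set c := (b - a) / x with hc
  have hcpos : 0 < c := div_pos (by linarith) hx
  have hea : Real.exp a = f 0 := Real.exp_log hf0pos
  have heb : Real.exp b = f x := Real.exp_log hm
  -- upper bound on the left half-line
  have hub : ∀ t ∈ Iio (0:ℝ), f t ≤ Real.exp (a + c * t) := by
    intro t ht
    simp only [mem_Iio] at ht
    rcases (hlc.1 t).lt_or_eq with hft | hft
    swap
    · rw [← hft]; positivity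
    have hxt : 0 < x - t := by linarith
    set l : ℝ := -t / (x - t) with hl
    have hl0 : 0 ≤ l := div_nonneg (by linarith) hxt.le
    have hl1 : l < 1 := by rw [div_lt_one hxt]; linarith
    have h0 := hlc.2 x t l hl0 hl1.le
    have hzero : l • x + (1 - l) • t = 0 := by
      simp only [smul_eq_mul, hl]; field_simp; ring
    rw [hzero, Real.rpow_def_of_pos hm, Real.rpow_def_of_pos hft, ← Real.exp_add, ← hea] at h0
    have h5 : b * l + Real.log (f t) * (1 - l) ≤ a := Real.exp_le_exp.mp h0
    have h7 : Real.log (f t) ≤ (a - b * l) / (1 - l) := by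
      rw [le_div_iff₀ (by linarith)]; linarith
    have h8 : (a - b * l) / (1 - l) = a + c * t := by
      rw [hl, hc]; field_simp [hx.ne']; ring
    calc f t = Real.exp (Real.log (f t)) := (Real.exp_log hft).symm
      _ ≤ Real.exp (a + c * t) := Real.exp_le_exp.mpr (h8 ▸ h7)
  -- lower bound on (0, x]
  have hlb : ∀ t ∈ Ioc (0:ℝ) x, Real.exp (a + c * t) ≤ f t := by
    rintro t ⟨ht0, htx⟩
    set l : ℝ := t / x with hl
    have hl0 : 0 ≤ l := div_nonneg ht0.le hx.le
    have hl1 : l ≤ 1 := (div_le_one hx).mpr htx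
    have h0 := hlc.2 x 0 l hl0 hl1
    have hzero : l • x + (1 - l) • (0:ℝ) = t := by
      simp only [smul_eq_mul, hl, mul_zero, add_zero]; field_simp
    rw [hzero, Real.rpow_def_of_pos hm, Real.rpow_def_of_pos hf0pos, ← Real.exp_add] at h0
    refine le_trans (le_of_eq ?_) h0
    congr 1
    rw [hl, hc]; field_simp; ring
  -- integrability of the exponential on Iio 0
  have hExpInt : IntegrableOn (fun t => Real.exp (a + c * t)) (Iio (0:ℝ)) := by
    have h1 : IntegrableOn (fun t => Real.exp (a + t)) (Iic (0:ℝ)) := by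
      have := (integrableOn_exp_Iic (0:ℝ)).const_mul (Real.exp a)
      simp only [← Real.exp_add] at this
      exact this
    have h2 : Integrable (fun t => ((Iic (0:ℝ)).indicator (fun s => Real.exp (a + s))) (c * t)) :=
      (integrable_comp_mul_left_iff ((Iic (0:ℝ)).indicator fun s => Real.exp (a + s))
        hcpos.ne').mpr (h1.integrable_indicator measurableSet_Iic)
    have h3 : (fun t => ((Iic (0:ℝ)).indicator (fun s => Real.exp (a + s))) (c * t))
        = (Iic (0:ℝ)).indicator (fun t => Real.exp (a + c * t)) := by
      ext t
      by_cases h : t ≤ 0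
      · simp [Set.indicator_of_mem, h, mul_nonpos_iff, hcpos.le,
          mul_nonpos_of_nonneg_of_nonpos hcpos.le h]
      · push_neg at h
        rw [Set.indicator_of_notMem (by simp only [Set.mem_Iic, not_le]; exact mul_pos hcpos h),
          Set.indicator_of_notMem (by simpa using h.not_ge)]
    rw [h3] at h2
    exact ((integrable_indicator_iff measurableSet_Iic).mp h2).mono_set Iio_subset_Iic_self
  -- value of the integral on Iio 0
  have hval : (∫ t in Iio (0:ℝ), Real.exp (a + c * t)) = Real.exp a / c := by
    rw [← integral_Iic_eq_integral_Iio]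
    have h4 : (∫ t in Iic (0:ℝ), Real.exp (a + c * t))
        = ∫ t in Ioi (0:ℝ), Real.exp a * Real.exp (-(c * t))  := by
      rw [show ((0:ℝ) = -0) by ring, ← integral_comp_neg_Ioi]
      simp [← Real.exp_add, mul_comm]
    rw [h4, integral_const_mul, integral_comp_mul_left_Ioi (fun s => Real.exp (-s)) 0 hcpos]
    simp [integral_exp_neg_Ioi, integral_exp_Iic_zero, div_eq_mul_inv, mul_comm]
  -- first inequality : ε ≤ exp a / c
  have hI1 : ε * c ≤ Real.exp a := by
    have : ε ≤ Real.exp a / c := by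
      calc ε ≤ ∫ t in Iio (0:ℝ), f t := by rw [hIio]; linarith
        _ ≤ ∫ t in Iio (0:ℝ), Real.exp (a + c * t) :=
            setIntegral_mono_on hInt.integrableOn hExpInt measurableSet_Iio hub
        _ = Real.exp a / c := hval
    rwa [le_div_iff₀ hcpos] at this
  -- second inequality : (exp b - exp a)/c ≤ 1 - ε
  have hI2 : Real.exp b - Real.exp a ≤ (1 - ε) * c := by
    have hvO : (∫ t in Ioc (0:ℝ) x, Real.exp (a + c * t))
        = (Real.exp b - Real.exp a) / c := by
      rw [← intervalIntegral.integral_of_le hx.le,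
        intervalIntegral.integral_comp_add_mul Real.exp hcpos.ne' a, integral_exp]
      rw [smul_eq_mul]
      have : a + c * x = b := by rw [hc]; field_simp; ring
      rw [this]
      field_simp
      simp
    have hcont : Continuous fun t : ℝ => Real.exp (a + c * t) := by continuity
    have : (Real.exp b - Real.exp a) / c ≤ 1 - ε := by
      calc (Real.exp b - Real.exp a) / c
          = ∫ t in Ioc (0:ℝ) x, Real.exp (a + c * t) := hvO.symm
        _ ≤ ∫ t in Ioc (0:ℝ) x, f t :=
            setIntegral_mono_on (hcont.integrableOn_Ioc) hInt.integrableOn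
              measurableSet_Ioc hlb
        _ ≤ ∫ t in Ioi (0:ℝ), f t :=
            setIntegral_mono_set hInt.integrableOn
              (Filter.Eventually.of_forall fun t => hlc.1 t)
              (HasSubset.Subset.eventuallyLE Ioc_subset_Ioi_self)
        _ ≤ 1 - ε := h₂
    rwa [div_le_iff₀ hcpos] at this
  have k1 : ε * (Real.exp b - Real.exp a) ≤ ε * ((1 - ε) * c) :=
    mul_le_mul_of_nonneg_left hI2 hε.le
  have k2 : (1 - ε) * (ε * c) ≤ (1 - ε) * Real.exp a :=
    mul_le_mul_of_nonneg_left hI1 (by linarith)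
  rw [hea, heb] at *
  nlinarith [k1, k2, hcon]

/-- for a log-concave probability density `f` on `ℝ`, if
`ε ≤ ∫₀^∞ f ≤ 1 - ε` then `f(0) ≥ ε sup f`. -/
theorem statement18 (f : ℝ → ℝ) (hlc : IsLogConcaveFn f) (hInt : Integrable f)
    (hmass : (∫ x, f x) = 1) (ε : ℝ) (hε : 0 < ε)
    (h₁ : ε ≤ ∫ x in Set.Ioi (0:ℝ), f x) (h₂ : (∫ x in Set.Ioi (0:ℝ), f x) ≤ 1 - ε) :
    ε * ⨆ x : ℝ, f x ≤ f 0 := by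
  have hε1 : ε ≤ 1 := by
    have := le_trans h₁ h₂; linarith
  have hall : ∀ y : ℝ, ε * f y ≤ f 0 := by
    intro y
    rcases lt_trichotomy y 0 with hy | hy | hy
    · -- reflect
      set g : ℝ → ℝ := fun t => f (-t) with hg
      have A : MeasurableEmbedding (fun x : ℝ => -x) :=
        (Homeomorph.neg ℝ).isClosedEmbedding.measurableEmbedding
      have hmap : Measure.map (fun x : ℝ => -x) volume = volume :=
        Measure.map_neg_eq_self (volume : Measure ℝ)
      have hgInt : Integrable g := by
        have h := A.integrable_map_iff (g := f) (μ := volume)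
        rw [hmap] at h
        exact h.mp hInt
      have hglc : IsLogConcaveFn g := by
        refine ⟨fun t => hlc.1 _, fun u v l hl0 hl1 => ?_⟩
        have := hlc.2 (-u) (-v) l hl0 hl1
        simpa [hg, smul_eq_mul, neg_add, mul_neg, add_comm] using this
      have hgmass : (∫ t, g t) = 1 := by
        have h := A.integral_map (μ := volume) (g := f)
        rw [hmap] at h
        simpa [hg] using (h.symm.trans hmass)
      have hgIoi : (∫ t in Set.Ioi (0:ℝ), g t) = 1 - ∫ t in Set.Ioi (0:ℝ), f t := by
        have h1 : (∫ t in Set.Ioi (0:ℝ), g t) = ∫ t in Set.Iic (0:ℝ), f t := by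
          have := integral_comp_neg_Ioi (0:ℝ) f
          rw [neg_zero] at this
          exact this
        have h2 := intervalIntegral.integral_Iic_add_Ioi (b := (0:ℝ)) (μ := volume)
          hInt.integrableOn hInt.integrableOn
        rw [hmass] at h2
        rw [h1]; linarith
      have hg₁ : ε ≤ ∫ t in Set.Ioi (0:ℝ), g t := by rw [hgIoi]; linarith
      have hg₂ : (∫ t in Set.Ioi (0:ℝ), g t) ≤ 1 - ε := by rw [hgIoi]; linarith
      have := key18 g hglc hgInt hgmass ε hε hg₁ hg₂ (-y) (by linarith)
      simpa [hg] using this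
    · subst hy
      nlinarith [hlc.1 0]
    · exact key18 f hlc hInt hmass ε hε h₁ h₂ y hy
  have hsup : (⨆ x : ℝ, f x) ≤ f 0 / ε :=
    Real.iSup_le (fun y => (le_div_iff₀ hε).mpr (by linarith [hall y]))
      (div_nonneg (hlc.1 0) hε.le)
  calc ε * ⨆ x : ℝ, f x ≤ ε * (f 0 / ε) := by
        exact mul_le_mul_of_nonneg_left hsup hε.le
    _ = f 0 := by field_simp
end
end
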